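/- Let k be a positive integer and let z_1, …, z_k be reals with 0 ≤ z_i ≤ 1 for each i. Then the function t ↦ 1 − Π_{i=1}^k (1 − t·z_i) is concave on the interval [0,1]. -/
import Mathlib

lemma aux_prod (k : ℕ) (z : Fin k → ℝ) (hz : ∀ i, z i ∈ Set.Icc (0:ℝ) 1)
    (s : Finset (Fin k)) :
    ConvexOn ℝ (Set.Icc (0:ℝ) 1) (fun t => ∏ i ∈ s, (1 - t * z i)) ∧
    (∀ t ∈ Set.Icc (0:ℝ) 1, 0 ≤ ∏ i ∈ s, (1 - t * z i)) ∧
    AntitoneOn (fun t => ∏ i ∈ s, (1 - t * z i)) (Set.Icc (0:ℝ) 1) := by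
  classical
  induction s using Finset.cons_induction with
  | empty =>
    simp only [Finset.prod_empty]
    exact ⟨convexOn_const 1 (convex_Icc 0 1), fun t _ => zero_le_one,
      fun a _ b _ _ => le_refl 1⟩
  | cons i s his ih =>
    obtain ⟨ihc, ihn, iha⟩ := ih
    have hzi := hz i
    have hfc : ConvexOn ℝ (Set.Icc (0:ℝ) 1) (fun t => 1 - t * z i) :=
      ⟨convex_Icc 0 1, fun x _ y _ a b _ _ hab => le_of_eq (by simp only [smul_eq_mul]; nlinarith [hab])⟩
    have hfn : ∀ t ∈ Set.Icc (0:ℝ) 1, 0 ≤ 1 - t * z i := by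
      intro t ht
      have : t * z i ≤ 1 * 1 := mul_le_mul ht.2 hzi.2 hzi.1 zero_le_one
      linarith
    have hfa : AntitoneOn (fun t => 1 - t * z i) (Set.Icc (0:ℝ) 1) := by
      intro a _ b _ hab
      have : a * z i ≤ b * z i := mul_le_mul_of_nonneg_right hab hzi.1
      simp only; linarith
    have key : ConvexOn ℝ (Set.Icc (0:ℝ) 1)
        ((fun t => 1 - t * z i) * fun t => ∏ j ∈ s, (1 - t * z j)) :=
      hfc.mul ihc (fun x hx => hfn x hx) (fun x hx => ihn x hx) (hfa.monovaryOn iha)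
    simp only [Finset.prod_cons]
    refine ⟨key, ?_, ?_⟩
    · intro t ht
      exact mul_nonneg (hfn t ht) (ihn t ht)
    · intro a ha b hb hab
      simp only
      exact mul_le_mul (hfa ha hb hab) (iha ha hb hab) (ihn b hb) (hfn a ha)

/-- For 0 ≤ z_i ≤ 1, the function t ↦ 1 − Π_i (1 − t·z_i) is concave on [0,1]. -/
theorem stmt_9 (k : ℕ) (hk : 0 < k) (z : Fin k → ℝ)
    (hz : ∀ i, z i ∈ Set.Icc (0:ℝ) 1) :
    ConcaveOn ℝ (Set.Icc (0:ℝ) 1) (fun t => 1 - ∏ i, (1 - t * z i)) := by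
  have h := (aux_prod k z hz Finset.univ).1
  have := (concaveOn_const (1:ℝ) (convex_Icc (0:ℝ) 1)).sub h
  simpa [Pi.sub_def] using this
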